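/- Let d ≥ 0, n ≥ 1, and let G be a connected locally finite (2d+n)-regular simple graph on vertex set V. Then G admits n pairwise orthogonal perfect matchings if and only if there exist permutations σ₁, …, σ_d of V and fixed-point-free involutions τ₁, …, τ_n of V such that for every vertex x the 2d+n vertices σ₁(x), σ₁⁻¹(x), …, σ_d(x), σ_d⁻¹(x), τ₁(x), …, τ_n(x) are pairwise distinct and their set is exactly the neighborhood of x in G. (Equivalently: G is isomorphic to a Schreier graph of F_d ∗ (ℤ/2ℤ)^{∗n}, where F_d is the free group of rank d, if and only if G has n pairwise orthogonal perfect matchings.) -/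

import Mathlib

open Function Set SimpleGraph

theorem my_csb {α β : Type*} (f : α → β) (g : β → α) (hf : Injective f) (hg : Injective g) :
    ∃ h : α → β, Bijective h ∧ ∀ a, h a = f a ∨ g (h a) = a := by
  classical
  rcases isEmpty_or_nonempty β with hβ | hβ
  · haveI : IsEmpty α := ⟨fun a => hβ.false (f a)⟩
    exact ⟨f, ⟨hf, fun b => hβ.elim b⟩, fun a => (IsEmpty.false a).elim⟩
  set A : Set α := ⋃ n : ℕ, (g ∘ f)^[n] '' (Set.range g)ᶜ with hA
  have hAstep : ∀ a ∈ A, g (f a) ∈ A := by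
    intro a ha
    rcases Set.mem_iUnion.1 ha with ⟨n, c, hc, rfl⟩
    exact Set.mem_iUnion.2 ⟨n + 1, c, hc, by rw [iterate_succ_apply' (g ∘ f) n c]; rfl⟩
  have hnotA : ∀ a, a ∉ A → a ∈ Set.range g := by
    intro a ha
    by_contra hr
    exact ha (Set.mem_iUnion.2 ⟨0, a, hr, rfl⟩)
  set h : α → β := fun a => if a ∈ A then f a else Function.invFun g a with hh
  have hin : ∀ a ∈ A, h a = f a := fun a ha => if_pos ha
  have hout : ∀ a ∉ A, g (h a) = a := by
    intro a ha
    rw [hh]; simp only [if_neg ha]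
    exact Function.invFun_eq (hnotA a ha)
  refine ⟨h, ⟨?_, ?_⟩, ?_⟩
  · intro a b hab
    by_cases haA : a ∈ A <;> by_cases hbA : b ∈ A
    · rw [hin a haA, hin b hbA] at hab; exact hf hab
    · exfalso
      have : b = g (f a) := by rw [← hout b hbA, ← hab, hin a haA]
      exact hbA (this ▸ hAstep a haA)
    · exfalso
      have : a = g (f b) := by rw [← hout a haA, hab, hin b hbA]

      exact haA (this ▸ hAstep b hbA)
    · rw [← hout a haA, ← hout b hbA, hab]
  · intro b
    by_cases hgb : g b ∈ A
    · rcases Set.mem_iUnion.1 hgb with ⟨n, c, hc, hcb⟩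
      cases n with
      | zero =>
          simp only [Function.iterate_zero, id_eq] at hcb
          exact absurd (hcb ▸ (Set.mem_range_self b : g b ∈ Set.range g)) hc
      | succ m =>
        rw [iterate_succ_apply' (g ∘ f) m c] at hcb
        have haA : (g ∘ f)^[m] c ∈ A := Set.mem_iUnion.2 ⟨m, c, hc, rfl⟩
        have : f ((g ∘ f)^[m] c) = b := hg hcb
        exact ⟨_, by rw [hin _ haA, this]⟩
    · refine ⟨g b, ?_⟩
      have := hout (g b) hgb
      exact hg this
  · intro a
    by_cases haA : a ∈ A
    · left; exact hin a haA
    · right; exact hout a haA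

theorem my_hall_cond {α β : Type*} [DecidableEq β] (ta : α → Finset β) (tb : β → Finset α)
    (compat : ∀ a b, a ∈ tb b ↔ b ∈ ta a) (k : ℕ) (hk : 0 < k)
    (ha : ∀ a, (ta a).card = k) (hb : ∀ b, (tb b).card ≤ k) :
    ∀ s : Finset α, s.card ≤ (s.biUnion ta).card := by
  classical
  intro s
  have key : k * s.card ≤ k * (s.biUnion ta).card := by
    set B := s.biUnion ta with hB
    have h1 : ∀ a ∈ s, (ta a).card = ∑ b ∈ B, (if b ∈ ta a then 1 else 0) := by
      intro a haa
      have hsub : ta a = B.filter (· ∈ ta a) := by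
        ext b
        simp only [Finset.mem_filter, hB, Finset.mem_biUnion]
        exact ⟨fun hbb => ⟨⟨a, haa, hbb⟩, hbb⟩, fun h => h.2⟩
      calc (ta a).card = (B.filter (· ∈ ta a)).card := by rw [← hsub]
        _ = ∑ b ∈ B, (if b ∈ ta a then 1 else 0) := Finset.card_filter _ _
    calc k * s.card = ∑ a ∈ s, (ta a).card := by
          rw [Finset.sum_congr rfl (fun a _ => ha a), Finset.sum_const, smul_eq_mul, mul_comm]
      _ = ∑ a ∈ s, ∑ b ∈ B, (if b ∈ ta a then 1 else 0) := Finset.sum_congr rfl h1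
      _ = ∑ b ∈ B, ∑ a ∈ s, (if b ∈ ta a then 1 else 0) := Finset.sum_comm
      _ = ∑ b ∈ B, (s.filter (fun a => b ∈ ta a)).card := by
          refine Finset.sum_congr rfl fun b _ => ?_
          rw [Finset.card_filter]
      _ ≤ ∑ b ∈ B, k := by
          refine Finset.sum_le_sum fun b _ => ?_
          refine le_trans (Finset.card_le_card ?_) (hb b)
          intro a haa
          simp only [Finset.mem_filter] at haa
          exact (compat a b).2 haa.2
      _ = k * B.card := by rw [Finset.sum_const, smul_eq_mul, mul_comm]
  exact Nat.le_of_mul_le_mul_left key hk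

theorem my_exists_bij_rel {α β : Type*} (ta : α → Finset β) (tb : β → Finset α)
    (compat : ∀ a b, a ∈ tb b ↔ b ∈ ta a) (k : ℕ) (hk : 0 < k)
    (ha : ∀ a, (ta a).card = k) (hb : ∀ b, (tb b).card = k) :
    ∃ h : α ≃ β, ∀ a, h a ∈ ta a := by
  classical
  obtain ⟨f, hfinj, hfmem⟩ := (Finset.all_card_le_biUnion_card_iff_exists_injective ta).1
    (my_hall_cond ta tb compat k hk ha (fun b => (hb b).le))
  obtain ⟨g, hginj, hgmem⟩ := (Finset.all_card_le_biUnion_card_iff_exists_injective tb).1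
    (my_hall_cond tb ta (fun b a => (compat a b).symm) k hk hb (fun a => (ha a).le))
  obtain ⟨h, hbij, hcase⟩ := my_csb f g hfinj hginj
  refine ⟨Equiv.ofBijective h hbij, fun a => ?_⟩
  rcases hcase a with h1 | h2
  · simpa [Equiv.ofBijective, h1] using hfmem a
  · have : g (h a) ∈ tb (h a) := hgmem (h a)
    rw [h2] at this
    simpa [Equiv.ofBijective] using (compat a (h a)).1 this

theorem my_bip_decomp {V : Type*} (k : ℕ) (R : V → V → Prop)
    (row col : V → Finset V)
    (hrowmem : ∀ x y, y ∈ row x ↔ R x y) (hcolmem : ∀ x y, x ∈ col y ↔ R x y)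
    (hrow : ∀ x, (row x).card = k) (hcol : ∀ y, (col y).card = k) :
    ∃ π : Fin k → Equiv.Perm V,
      (∀ x, Function.Injective fun i : Fin k => π i x) ∧
      (∀ x y, R x y ↔ ∃ i, π i x = y) := by
  classical
  induction k generalizing R row col with
  | zero =>
    refine ⟨Fin.elim0, fun x i => i.elim0, fun x y => ?_⟩
    constructor
    · intro hR
      have : y ∈ row x := (hrowmem x y).2 hR
      rw [Finset.card_eq_zero.1 (hrow x)] at this
      exact absurd this (Finset.notMem_empty y)
    · rintro ⟨i, -⟩; exact i.elim0
  | succ m ih =>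
    obtain ⟨h, hmem⟩ := my_exists_bij_rel row col
      (fun x y => by rw [hrowmem, hcolmem]) (m + 1) (Nat.succ_pos m) hrow hcol
    set R' : V → V → Prop := fun x y => R x y ∧ y ≠ h x with hR'
    have hrow' : ∀ x, ((row x).erase (h x)).card = m := by
      intro x
      rw [Finset.card_erase_of_mem (hmem x), hrow]; omega
    have hsymmem : ∀ y, h.symm y ∈ col y := by
      intro y
      rw [hcolmem, ← hrowmem]
      simpa using hmem (h.symm y)
    have hcol' : ∀ y, ((col y).erase (h.symm y)).card = m := by
      intro y
      rw [Finset.card_erase_of_mem (hsymmem y), hcol]; omega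
    obtain ⟨π', hinj', hcov'⟩ := ih R' (fun x => (row x).erase (h x))
      (fun y => (col y).erase (h.symm y))
      (fun x y => by
        rw [Finset.mem_erase, hrowmem]
        exact ⟨fun p => ⟨p.2, p.1⟩, fun p => ⟨p.2, p.1⟩⟩)
      (fun x y => by
        rw [Finset.mem_erase, hcolmem, hR']
        constructor
        · rintro ⟨hne, hr⟩
          exact ⟨hr, fun hy => hne (by rw [hy, Equiv.symm_apply_apply])⟩
        · rintro ⟨hr, hne⟩
          exact ⟨fun hx => hne (by rw [hx, Equiv.apply_symm_apply]), hr⟩)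
      hrow' hcol'
    have key : ∀ x (i : Fin m), π' i x ≠ h x := by
      intro x i hix
      have : R' x (π' i x) := (hcov' x (π' i x)).2 ⟨i, rfl⟩
      exact this.2 hix
    refine ⟨Fin.cons h π', fun x => ?_, fun x y => ?_⟩
    · intro i j hij
      simp only at hij
      rcases Fin.eq_zero_or_eq_succ i with rfl | ⟨i', rfl⟩ <;>
        rcases Fin.eq_zero_or_eq_succ j with rfl | ⟨j', rfl⟩
      · rfl
      · rw [Fin.cons_zero, Fin.cons_succ] at hij
        exact absurd hij.symm (key x j')
      · rw [Fin.cons_zero, Fin.cons_succ] at hij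
        exact absurd hij (key x i')
      · rw [Fin.cons_succ, Fin.cons_succ] at hij
        rw [hinj' x hij]
    · constructor
      · intro hR
        by_cases hy : y = h x
        · exact ⟨0, by rw [Fin.cons_zero, hy]⟩
        · obtain ⟨i, hi⟩ := (hcov' x y).1 ⟨hR, hy⟩
          exact ⟨i.succ, by rw [Fin.cons_succ, hi]⟩
      · rintro ⟨i, rfl⟩
        rcases Fin.eq_zero_or_eq_succ i with rfl | ⟨i', rfl⟩
        · rw [Fin.cons_zero, ← hrowmem]
          exact hmem x
        · rw [Fin.cons_succ]
          exact ((hcov' x _).2 ⟨i', rfl⟩).1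

theorem my_orient {V : Type*} (H : SimpleGraph V) [H.LocallyFinite] (d : ℕ)
    (hreg : H.IsRegularOfDegree (2 * d)) :
    ∃ (A : V → V → Prop) (row col : V → Finset V),
      (∀ x y, A x y → H.Adj x y) ∧ (∀ x y, ¬(A x y ∧ A y x)) ∧
      (∀ x y, H.Adj x y → (A x y ∨ A y x)) ∧
      (∀ x y, y ∈ row x ↔ A x y) ∧ (∀ x y, x ∈ col y ↔ A x y) ∧
      (∀ x, (row x).card = d) ∧ (∀ y, (col y).card = d) := by
  classical
  rcases Nat.eq_zero_or_pos d with rfl | hd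
  · -- no edges
    have hnoadj : ∀ x y, ¬ H.Adj x y := by
      intro x y hxy
      have h1 : y ∈ H.neighborFinset x := (H.mem_neighborFinset x y).2 hxy
      have h0 : (H.neighborFinset x).card = 0 := by simpa using (hreg x : H.degree x = 2 * 0)
      rw [Finset.card_eq_zero.1 h0] at h1
      exact absurd h1 (Finset.notMem_empty y)
    exact ⟨fun _ _ => False, fun _ => ∅, fun _ => ∅,
      fun x y h => h.elim, fun x y h => h.1, fun x y h => absurd h (hnoadj x y),
      fun x y => by simp, fun x y => by simp, fun x => rfl, fun y => rfl⟩
  set E := {e : Sym2 V // e ∈ H.edgeSet} with hE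
  set eFin : Sym2 V → Finset V :=
    Sym2.lift ⟨fun a b => {a, b}, fun a b => by ext z; simp [or_comm]⟩ with heFin
  have heFin_mem : ∀ (e : Sym2 V) (z : V), z ∈ eFin e ↔ z ∈ e := by
    intro e z
    induction e using Sym2.ind with
    | _ a b => simp [heFin, Sym2.mem_iff]
  have heFin_card : ∀ e : E, (eFin e.1).card = 2 := by
    rintro ⟨e, he⟩
    induction e using Sym2.ind with
    | _ a b =>
      have hne : a ≠ b := by
        intro hab
        exact H.not_isDiag_of_mem_edgeSet he (by rw [hab]; exact Sym2.mk_isDiag_iff.2 rfl)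
      simp only [heFin, Sym2.lift_mk]
      exact Finset.card_pair hne
  set ta : E → Finset (V × Fin d) := fun e => (eFin e.1) ×ˢ Finset.univ with hta
  set tb : V × Fin d → Finset E :=
    fun p => (H.incidenceFinset p.1).subtype (· ∈ H.edgeSet) with htb
  have hcompat : ∀ (e : E) (p : V × Fin d), e ∈ tb p ↔ p ∈ ta e := by
    rintro ⟨e, he⟩ ⟨v, k⟩
    rw [show tb (v, k) = (H.incidenceFinset v).subtype (· ∈ H.edgeSet) from rfl,
      Finset.mem_subtype]
    rw [show ta ⟨e, he⟩ = (eFin e) ×ˢ Finset.univ from rfl]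
    simp only [Finset.mem_product, Finset.mem_univ, and_true, heFin_mem,
      mem_incidenceFinset]
    show e ∈ H.incidenceSet v ↔ v ∈ e
    simp only [SimpleGraph.incidenceSet, Set.mem_sep_iff]
    exact ⟨fun h => h.2, fun h => ⟨he, h⟩⟩
  have hta_card : ∀ e : E, (ta e).card = 2 * d := by
    intro e
    simp [hta, Finset.card_product, heFin_card e]
  have htb_card : ∀ p : V × Fin d, (tb p).card = 2 * d := by
    rintro ⟨v, k⟩
    simp only [htb]
    rw [Finset.card_subtype]
    have : (H.incidenceFinset v).filter (· ∈ H.edgeSet) = H.incidenceFinset v := by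
      refine Finset.filter_true_of_mem fun e he => ?_
      exact ((H.mem_incidenceFinset v e).1 he).1
    rw [this, card_incidenceFinset_eq_degree]
    exact hreg v
  obtain ⟨hbij, hhead⟩ := my_exists_bij_rel ta tb (hcompat) (2 * d) (by omega) hta_card htb_card
  -- head of an edge
  have hhead' : ∀ e : E, (hbij e).1 ∈ e.1 := by
    intro e
    have := hhead e
    simp only [hta, Finset.mem_product] at this
    exact (heFin_mem e.1 _).1 this.1
  set A : V → V → Prop :=
    fun x y => H.Adj x y ∧ ∀ q : s(x, y) ∈ H.edgeSet, (hbij ⟨s(x, y), q⟩).1 = y with hA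
  have hAadj : ∀ x y, A x y → H.Adj x y := fun x y h => h.1
  have hAsub : ∀ (e : E) (x y : V), e.1 = s(x,y) → (hbij e).1 = y → A x y := by
    rintro ⟨e, he⟩ x y rfl hh
    exact ⟨(H.mem_edgeSet).1 he, fun q => hh⟩
  have hnotboth : ∀ x y, ¬(A x y ∧ A y x) := by
    rintro x y ⟨⟨hadj, h1⟩, ⟨hadj', h2⟩⟩
    have he : s(x, y) ∈ H.edgeSet := (H.mem_edgeSet).2 hadj
    have he' : s(y, x) ∈ H.edgeSet := (H.mem_edgeSet).2 hadj'
    have hxy : (⟨s(y, x), he'⟩ : E) = ⟨s(x, y), he⟩ := Subtype.ext Sym2.eq_swap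
    have := h2 he'
    rw [hxy] at this
    rw [h1 he] at this
    exact hadj.ne this.symm
  have hcover : ∀ x y, H.Adj x y → A x y ∨ A y x := by
    intro x y hadj
    have he : s(x, y) ∈ H.edgeSet := (H.mem_edgeSet).2 hadj
    have := hhead' ⟨s(x, y), he⟩
    rw [Sym2.mem_iff] at this
    rcases this with h1 | h2
    · right
      exact hAsub ⟨s(x,y), he⟩ y x Sym2.eq_swap h1
    · left
      exact hAsub ⟨s(x,y), he⟩ x y rfl h2
  set col : V → Finset V := fun y => (H.neighborFinset y).filter (fun x => A x y) with hcol
  set row : V → Finset V := fun x => (H.neighborFinset x).filter (fun y => A x y) with hrow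
  have hcolmem : ∀ x y, x ∈ col y ↔ A x y := by
    intro x y
    simp only [hcol, Finset.mem_filter, mem_neighborFinset]
    exact ⟨fun h => h.2, fun h => ⟨(hAadj x y h).symm, h⟩⟩
  have hrowmem : ∀ x y, y ∈ row x ↔ A x y := by
    intro x y
    simp only [hrow, Finset.mem_filter, mem_neighborFinset]
    exact ⟨fun h => h.2, fun h => ⟨hAadj x y h, h⟩⟩
  have hcolcard : ∀ y, (col y).card = d := by
    intro y
    have := Finset.card_bij (s := col y) (t := (Finset.univ : Finset (Fin d)))
      (fun x hx => (hbij ⟨s(x, y), (H.mem_edgeSet).2 (hAadj x y ((hcolmem x y).1 hx))⟩).2)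
      (fun x hx => Finset.mem_univ _)
      ?_ ?_
    · rw [this, Finset.card_univ, Fintype.card_fin]
    · intro x1 hx1 x2 hx2 heq
      have hA1 := (hcolmem x1 y).1 hx1
      have hA2 := (hcolmem x2 y).1 hx2
      set e1 : E := ⟨s(x1, y), (H.mem_edgeSet).2 (hAadj _ _ hA1)⟩
      set e2 : E := ⟨s(x2, y), (H.mem_edgeSet).2 (hAadj _ _ hA2)⟩
      have hfst1 : (hbij e1).1 = y := hA1.2 _
      have hfst2 : (hbij e2).1 = y := hA2.2 _
      have : hbij e1 = hbij e2 := by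
        apply Prod.ext
        · rw [hfst1, hfst2]
        · exact heq
      have := hbij.injective this
      have h3 := congrArg Subtype.val this
      simp only [e1, e2] at h3
      rw [Sym2.eq_iff] at h3
      rcases h3 with ⟨h4, -⟩ | ⟨h4, h5⟩
      · exact h4
      · exact h4.trans h5
    · intro k _
      set e := hbij.symm (y, k) with he
      have h1 : (hbij e).1 = y := by rw [he, Equiv.apply_symm_apply]
      have hy : y ∈ e.1 := by rw [← h1]; exact hhead' e
      rcases Sym2.mem_iff_exists.1 hy with ⟨x, hx⟩
      have hadj : H.Adj y x := (H.mem_edgeSet).1 (hx ▸ e.2)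
      have hAxy : A x y := hAsub e x y (hx.trans Sym2.eq_swap) h1
      refine ⟨x, (hcolmem x y).2 hAxy, ?_⟩
      have heq : (⟨s(x, y), (H.mem_edgeSet).2 (hAadj x y hAxy)⟩ : E) = e :=
        Subtype.ext (by rw [hx]; exact Sym2.eq_swap)
      show (hbij ⟨s(x, y), (H.mem_edgeSet).2 (hAadj x y hAxy)⟩).2 = k
      rw [heq, he, Equiv.apply_symm_apply]
  have hrowcard : ∀ x, (row x).card = d := by
    intro x
    have hneg : Finset.filter (fun z => ¬ A z x) (H.neighborFinset x) = row x := by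
      ext z
      simp only [hrow, Finset.mem_filter, mem_neighborFinset]
      constructor
      · rintro ⟨hz, hna⟩
        refine ⟨hz, ?_⟩
        rcases hcover x z hz with h | h
        · exact h
        · exact absurd h hna
      · rintro ⟨hz, ha⟩
        exact ⟨hz, fun h2 => hnotboth x z ⟨ha, h2⟩⟩
    have hdeg : (H.neighborFinset x).card = 2 * d := hreg x
    have hsum := Finset.card_filter_add_card_filter_not (s := H.neighborFinset x)
      (p := fun z => A z x)
    rw [hneg, hdeg] at hsum
    have h2 : (col x).card + (row x).card = 2 * d := hsum
    have h3 := hcolcard x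
    omega
  exact ⟨A, row, col, hAadj, hnotboth, hcover, hrowmem, hcolmem, hrowcard, hcolcard⟩


/-- Let `G` be a connected locally finite `(2d+n)`-regular simple graph,
`n ≥ 1`.  Then `G` admits `n` pairwise orthogonal perfect matchings iff there are permutations
`σ₁, …, σ_d` of `V` and fixed-point-free involutions `τ₁, …, τ_n` of `V` such that for every
vertex `x` the `2d+n` vertices `σ₁ x, σ₁⁻¹ x, …, σ_d x, σ_d⁻¹ x, τ₁ x, …, τ_n x` are pairwise
distinct and their set is exactly the neighborhood of `x`.  (Equivalently: `G` is isomorphic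
to a Schreier graph of `F_d ∗ (ℤ/2ℤ)^{∗n}` iff it has `n` pairwise orthogonal perfect
matchings.) -/
theorem orthogonal_matchings_iff_schreier_of_free_product {V : Type*} (G : SimpleGraph V)
    [G.LocallyFinite] (d n : ℕ) (hn : 1 ≤ n) (hconn : G.Connected)
    (hreg : G.IsRegularOfDegree (2 * d + n)) :
    (∃ M : Fin n → G.Subgraph,
        (∀ i, (M i).IsPerfectMatching) ∧
        ∀ i j, i ≠ j → Disjoint (M i).edgeSet (M j).edgeSet) ↔
    (∃ (σ : Fin d → Equiv.Perm V) (τ : Fin n → Equiv.Perm V),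
        (∀ j, ∀ x, τ j (τ j x) = x) ∧
        (∀ j, ∀ x, τ j x ≠ x) ∧
        ∀ x : V,
          Function.Injective
            (Sum.elim (Sum.elim (fun i : Fin d => σ i x) (fun i : Fin d => (σ i)⁻¹ x))
              (fun j : Fin n => τ j x)) ∧
          Set.range
            (Sum.elim (Sum.elim (fun i : Fin d => σ i x) (fun i : Fin d => (σ i)⁻¹ x))
              (fun j : Fin n => τ j x)) = G.neighborSet x) := by
  classical
  constructor
  · rintro ⟨M, hM, hdisj⟩
    -- the matching partner functions
    have hEU : ∀ (j : Fin n) (x : V), ∃! y, (M j).Adj x y := fun j x =>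
      (hM j).1 ((hM j).2 x)
    set t : Fin n → V → V := fun j x => (hEU j x).choose with ht
    have htadj : ∀ j x, (M j).Adj x (t j x) := fun j x => (hEU j x).choose_spec.1
    have htuniq : ∀ j x y, (M j).Adj x y → y = t j x := fun j x y h =>
      (hEU j x).choose_spec.2 y h
    have htinvol : ∀ j, Function.Involutive (t j) := by
      intro j x
      exact (htuniq j (t j x) x (htadj j x).symm).symm
    have htne : ∀ j x, t j x ≠ x := fun j x h =>
      G.loopless.irrefl x (by have := (M j).adj_sub (htadj j x); rwa [h] at this)
    have htGadj : ∀ j x, G.Adj x (t j x) := fun j x => (M j).adj_sub (htadj j x)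
    have htinj : ∀ x (i j : Fin n), t i x = t j x → i = j := by
      intro x i j hij
      by_contra hne
      have h1 : s(x, t i x) ∈ (M i).edgeSet := SimpleGraph.Subgraph.mem_edgeSet.2 (htadj i x)
      have h2 : s(x, t i x) ∈ (M j).edgeSet := by
        rw [hij]; exact SimpleGraph.Subgraph.mem_edgeSet.2 (htadj j x)
      exact Set.disjoint_left.1 (hdisj i j hne) h1 h2
    -- the graph H of non-matching edges
    set H : SimpleGraph V :=
      { Adj := fun x y => G.Adj x y ∧ ∀ j, t j x ≠ y ∧ t j y ≠ x
        symm := by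
          refine ⟨?_⟩; rintro x y ⟨h1, h2⟩
          exact ⟨h1.symm, fun j => ⟨(h2 j).2, (h2 j).1⟩⟩
        loopless := ⟨fun x h => G.loopless.irrefl x h.1⟩ } with hH
    have hHadj : ∀ x y, H.Adj x y ↔ G.Adj x y ∧ ∀ j, t j x ≠ y := by
      intro x y
      constructor
      · rintro ⟨h1, h2⟩; exact ⟨h1, fun j => (h2 j).1⟩
      · rintro ⟨h1, h2⟩
        refine ⟨h1, fun j => ⟨h2 j, fun hc => h2 j ?_⟩⟩
        rw [← hc, htinvol j]
    haveI hHlf : H.LocallyFinite := fun v =>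
      Set.Finite.fintype (Set.Finite.subset (G.neighborSet v).toFinite
        (fun z hz => hz.1))
    have hHreg : H.IsRegularOfDegree (2 * d) := by
      intro x
      show (H.neighborFinset x).card = 2 * d
      have hfeq : H.neighborFinset x =
          (G.neighborFinset x).filter (fun y => ∀ j, t j x ≠ y) := by
        ext z
        rw [SimpleGraph.mem_neighborFinset, Finset.mem_filter, SimpleGraph.mem_neighborFinset,
          hHadj]
      have hneg : (G.neighborFinset x).filter (fun y => ¬ ∀ j, t j x ≠ y) =
          Finset.image (fun j => t j x) Finset.univ := by
        ext z
        simp only [Finset.mem_filter, Finset.mem_image, Finset.mem_univ, true_and,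
          SimpleGraph.mem_neighborFinset, not_forall, not_not]
        constructor
        · rintro ⟨-, j, hj⟩; exact ⟨j, hj⟩
        · rintro ⟨j, hj⟩
          exact ⟨hj ▸ htGadj j x, j, hj⟩
      have hcardneg : ((G.neighborFinset x).filter (fun y => ¬ ∀ j, t j x ≠ y)).card = n := by
        rw [hneg, Finset.card_image_of_injective _ (fun i j h => htinj x i j h)]
        simp
      have hsum := Finset.card_filter_add_card_filter_not
        (s := G.neighborFinset x) (p := fun y => ∀ j, t j x ≠ y)
      rw [hcardneg] at hsum
      have hdeg : (G.neighborFinset x).card = 2 * d + n := hreg x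
      rw [hdeg] at hsum
      rw [hfeq]
      omega
    obtain ⟨A, row, col, hAadj, hAnotboth, hAcover, hrowmem, hcolmem, hrowcard, hcolcard⟩ :=
      my_orient H d hHreg
    obtain ⟨π, hπinj, hπcov⟩ := my_bip_decomp d A row col hrowmem hcolmem hrowcard hcolcard
    refine ⟨π, fun j => Function.Involutive.toPerm (t j) (htinvol j), fun j x => htinvol j x,
      fun j x => htne j x, fun x => ?_⟩
    have hvalτ : ∀ j : Fin n, (Function.Involutive.toPerm (t j) (htinvol j) : Equiv.Perm V) x
        = t j x := fun j => rfl
    have hAfwd : ∀ i : Fin d, A x (π i x) := fun i => (hπcov x (π i x)).2 ⟨i, rfl⟩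
    have hAbwd : ∀ i : Fin d, A ((π i)⁻¹ x) x := by
      intro i
      refine (hπcov ((π i)⁻¹ x) x).2 ⟨i, ?_⟩
      simp
    have hinvval : ∀ (i : Fin d) (y : V), (π i)⁻¹ x = y ↔ π i y = x := by
      intro i y
      rw [Equiv.Perm.inv_def]
      exact ⟨fun h => by rw [← h, Equiv.apply_symm_apply], fun h => by rw [← h, Equiv.symm_apply_apply]⟩
    have f3 : ∀ (i i' : Fin d), π i x ≠ (π i')⁻¹ x := by
      intro i i' hc
      refine hAnotboth x (π i x) ⟨hAfwd i, ?_⟩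
      have := hAbwd i'
      rwa [← hc] at this
    have f5 : ∀ (i : Fin d) (j : Fin n), π i x ≠ t j x := by
      intro i j hc
      have hH := hAadj x (π i x) (hAfwd i)
      exact ((hHadj x (π i x)).1 hH).2 j hc.symm
    have f6 : ∀ (i : Fin d) (j : Fin n), (π i)⁻¹ x ≠ t j x := by
      intro i j hc
      have hH := (hAadj ((π i)⁻¹ x) x (hAbwd i)).symm
      exact ((hHadj x ((π i)⁻¹ x)).1 hH).2 j hc.symm
    constructor
    · -- injectivity
      rintro ((i | i) | i) ((i' | i') | i') hab <;>
        simp only [Sum.elim_inl, Sum.elim_inr, hvalτ] at hab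
      · rw [hπinj x hab]
      · exact absurd hab (f3 i i')
      · exact absurd hab (f5 i i')
      · exact absurd hab.symm (f3 i' i)
      · have h1 : π i ((π i)⁻¹ x) = x := (hinvval i _).1 rfl
        have h2 : π i' ((π i)⁻¹ x) = x := by
          rw [show ((π i)⁻¹ x) = ((π i')⁻¹ x) from hab]
          exact (hinvval i' _).1 rfl
        rw [hπinj ((π i)⁻¹ x) (h1.trans h2.symm)]
      · exact absurd hab (f6 i i')
      · exact absurd hab.symm (f5 i' i)
      · exact absurd hab.symm (f6 i' i)
      · rw [htinj x i i' hab]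
    · -- range
      ext y
      constructor
      · rintro ⟨(i | i) | j, rfl⟩ <;> simp only [Sum.elim_inl, Sum.elim_inr, hvalτ]
        · exact (hAadj x (π i x) (hAfwd i)).1
        · exact ((hAadj ((π i)⁻¹ x) x (hAbwd i)).symm).1
        · exact htGadj j x
      · intro hy
        have hGadj : G.Adj x y := hy
        by_cases hex : ∃ j, t j x = y
        · obtain ⟨j, hj⟩ := hex
          exact ⟨Sum.inr j, hj⟩
        · push_neg at hex
          have hHxy : H.Adj x y := (hHadj x y).2 ⟨hGadj, hex⟩
          rcases hAcover x y hHxy with h | h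
          · obtain ⟨i, hi⟩ := (hπcov x y).1 h
            exact ⟨Sum.inl (Sum.inl i), hi⟩
          · obtain ⟨i, hi⟩ := (hπcov y x).1 h
            exact ⟨Sum.inl (Sum.inr i), (hinvval i y).2 hi⟩

  · rintro ⟨σ, τ, hinvol, hfpf, hloc⟩
    have hadjτ : ∀ (j : Fin n) (x : V), G.Adj x (τ j x) := by
      intro j x
      have h2 := (hloc x).2
      have : τ j x ∈ Set.range
          (Sum.elim (Sum.elim (fun i : Fin d => σ i x) (fun i : Fin d => (σ i)⁻¹ x))
            (fun j : Fin n => τ j x)) := ⟨Sum.inr j, rfl⟩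
      rw [h2] at this
      exact this
    refine ⟨fun j =>
      { verts := Set.univ
        Adj := fun x y => τ j x = y
        adj_sub := by rintro x y rfl; exact hadjτ j x
        edge_vert := fun {x y} _ => trivial
        symm := ⟨by rintro x y rfl; exact hinvol j x⟩ }, fun j => ⟨?_, fun v => trivial⟩, ?_⟩
    · rintro v -
      exact ⟨τ j v, rfl, fun y hy => Eq.symm (hy : τ j v = y)⟩
    · intro i j hij
      rw [Set.disjoint_left]
      intro e he1 he2
      induction e using Sym2.ind with
      | _ x y =>
        rw [SimpleGraph.Subgraph.mem_edgeSet] at he1 he2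
        have h1 : τ i x = y := he1
        have h2 : τ j x = y := he2
        have h3 := (hloc x).1 (a₁ := Sum.inr i) (a₂ := Sum.inr j)
          (by simpa using h1.trans h2.symm)
        exact hij (by injection h3)
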